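/- Let i, k, t be positive integers with i ≤ k − 2, and let x_i,...,x_{k−1} be odd positive integers such that both D := 2·σ_{k−i−1}(x_i,...,x_{k−1}) − x_i²·σ_{k−i−2}(x_{i+1},...,x_{k−1}) and D' := 2·σ_{k−i−1}(x_i,...,x_{k−2}, x_{k−1}+2t) − x_i²·σ_{k−i−2}(x_{i+1},...,x_{k−2}, x_{k−1}+2t) are positive. Then (x_i − 2)·x_i⋯x_{k−1} / D > (x_i − 2)·x_i⋯x_{k−2}·(x_{k−1}+2t) / D', i.e. increasing the last variable by 2t strictly decreases the bound. Moreover, the difference of cross products equals 2t·(x_i − 2)²·(x_i⋯x_{k−2})². -/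

import Mathlib

/-- The elementary symmetric polynomial of degree `d` in the variables `f j`, `j ∈ s`. -/
def esymN (s : Finset ℕ) (f : ℕ → ℤ) (d : ℕ) : ℤ :=
  ∑ u ∈ s.powersetCard d, ∏ j ∈ u, f j

lemma esymN_zero (s : Finset ℕ) (f : ℕ → ℤ) : esymN s f 0 = 1 := by
  simp [esymN, Finset.powersetCard_zero]

lemma esymN_card (s : Finset ℕ) (f : ℕ → ℤ) : esymN s f s.card = ∏ j ∈ s, f j := by
  simp [esymN, Finset.powersetCard_self]

lemma esymN_congr {s : Finset ℕ} {f g : ℕ → ℤ} (h : ∀ j ∈ s, f j = g j) (d : ℕ) :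
    esymN s f d = esymN s g d := by
  refine Finset.sum_congr rfl fun u hu => Finset.prod_congr rfl fun j hj => ?_
  exact h j ((Finset.mem_powersetCard.mp hu).1 hj)

lemma esymN_insert {a : ℕ} {s : Finset ℕ} (ha : a ∉ s) (f : ℕ → ℤ) (d : ℕ) :
    esymN (insert a s) f (d + 1) = esymN s f (d + 1) + f a * esymN s f d := by
  unfold esymN
  rw [Finset.powersetCard_succ_insert ha, Finset.sum_union, Finset.sum_image, Finset.mul_sum]
  · congr 1
    refine Finset.sum_congr rfl fun u hu => ?_
    exact Finset.prod_insert fun hau => ha ((Finset.mem_powersetCard.mp hu).1 hau)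
  · intro u hu v hv huv
    have hau : a ∉ u := fun h => ha ((Finset.mem_powersetCard.mp hu).1 h)
    have hav : a ∉ v := fun h => ha ((Finset.mem_powersetCard.mp hv).1 h)
    rw [← Finset.erase_insert hau, ← Finset.erase_insert hav, huv]
  · rw [Finset.disjoint_left]
    intro u hu hu'
    obtain ⟨v, hv, rfl⟩ := Finset.mem_image.mp hu'
    exact ha ((Finset.mem_powersetCard.mp hu).1 (Finset.mem_insert_self a v))

theorem stmt_17' (i k t : ℕ) (ht : 0 < t) (hik : i ≤ k - 2) (hk : 2 ≤ k)
    (x : ℕ → ℕ) (hx : ∀ j, i ≤ j → j ≤ k - 1 → Odd (x j) ∧ 0 < x j)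
    (hD : 0 < 2 * esymN (Finset.Icc i (k - 1)) (fun j => (x j : ℤ)) (k - i - 1) -
      (x i : ℤ) ^ 2 * esymN (Finset.Icc (i + 1) (k - 1)) (fun j => (x j : ℤ)) (k - i - 2))
    (hD' : 0 < 2 * esymN (Finset.Icc i (k - 1))
        (Function.update (fun j => (x j : ℤ)) (k - 1) ((x (k - 1) : ℤ) + 2 * t)) (k - i - 1) -
      (x i : ℤ) ^ 2 * esymN (Finset.Icc (i + 1) (k - 1))
        (Function.update (fun j => (x j : ℤ)) (k - 1) ((x (k - 1) : ℤ) + 2 * t)) (k - i - 2)) :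
    (((x i : ℤ) - 2) * (∏ j ∈ Finset.Icc i (k - 1), (x j : ℤ))) *
        (2 * esymN (Finset.Icc i (k - 1))
            (Function.update (fun j => (x j : ℤ)) (k - 1) ((x (k - 1) : ℤ) + 2 * t)) (k - i - 1) -
          (x i : ℤ) ^ 2 * esymN (Finset.Icc (i + 1) (k - 1))
            (Function.update (fun j => (x j : ℤ)) (k - 1) ((x (k - 1) : ℤ) + 2 * t)) (k - i - 2)) -
      (((x i : ℤ) - 2) * (∏ j ∈ Finset.Icc i (k - 2), (x j : ℤ)) * ((x (k - 1) : ℤ) + 2 * t)) *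
        (2 * esymN (Finset.Icc i (k - 1)) (fun j => (x j : ℤ)) (k - i - 1) -
          (x i : ℤ) ^ 2 * esymN (Finset.Icc (i + 1) (k - 1)) (fun j => (x j : ℤ)) (k - i - 2)) =
      2 * t * ((x i : ℤ) - 2) ^ 2 * (∏ j ∈ Finset.Icc i (k - 2), (x j : ℤ)) ^ 2 := by
  obtain ⟨n, rfl⟩ : ∃ n, k = i + n + 2 := ⟨k - 2 - i, by omega⟩
  set f : ℕ → ℤ := fun j => (x j : ℤ) with hf
  set g : ℕ → ℤ := Function.update f (i + n + 2 - 1) ((x (i + n + 2 - 1) : ℤ) + 2 * t) with hg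
  simp only [show i + n + 2 - 1 = i + n + 1 from by omega, show i + n + 2 - 2 = i + n from by omega,
    show i + n + 2 - i - 1 = n + 1 from by omega, show i + n + 2 - i - 2 = n from by omega] at *
  have hmem1 : (i + n + 1) ∉ Finset.Icc i (i + n) := by simp [Finset.mem_Icc]
  have hmem2 : (i + n + 1) ∉ Finset.Icc (i + 1) (i + n) := by simp [Finset.mem_Icc]
  have hset1 : Finset.Icc i (i + n + 1) = insert (i + n + 1) (Finset.Icc i (i + n)) := by
    ext j; simp only [Finset.mem_Icc, Finset.mem_insert]; omega
  have hset2 : Finset.Icc (i + 1) (i + n + 1) = insert (i + n + 1) (Finset.Icc (i + 1) (i + n)) := by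
    ext j; simp only [Finset.mem_Icc, Finset.mem_insert]; omega
  have hgf1 : ∀ j ∈ Finset.Icc i (i + n), f j = g j := by
    intro j hj
    rw [hg, Function.update_of_ne]
    exact fun h => hmem1 (h ▸ hj)
  have hgf2 : ∀ j ∈ Finset.Icc (i + 1) (i + n), f j = g j := by
    intro j hj
    rw [hg, Function.update_of_ne]
    exact fun h => hmem2 (h ▸ hj)
  have hgw : g (i + n + 1) = f (i + n + 1) + 2 * t := Function.update_self _ _ _
  set P : ℤ := ∏ j ∈ Finset.Icc i (i + n), f j with hP
  set Q : ℤ := ∏ j ∈ Finset.Icc (i + 1) (i + n), f j with hQ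
  have hcard1 : (Finset.Icc i (i + n)).card = n + 1 := by rw [Nat.card_Icc]; omega
  have hcard2 : (Finset.Icc (i + 1) (i + n)).card = n := by rw [Nat.card_Icc]; omega
  have hPQ : P = f i * Q := by
    rw [hP, hQ, show Finset.Icc i (i + n) = insert i (Finset.Icc (i + 1) (i + n)) from by
      ext j; simp only [Finset.mem_Icc, Finset.mem_insert]; omega,
      Finset.prod_insert (by simp [Finset.mem_Icc])]
  have hE1 : esymN (Finset.Icc i (i + n)) f (n + 1) = P := by
    rw [← hcard1, esymN_card]
  have hE1g : esymN (Finset.Icc i (i + n)) g (n + 1) = P := by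
    rw [← esymN_congr hgf1, ← hcard1, esymN_card]
  have hAg : esymN (Finset.Icc i (i + n)) g n = esymN (Finset.Icc i (i + n)) f n :=
    (esymN_congr hgf1 n).symm
  set A : ℤ := esymN (Finset.Icc i (i + n)) f n with hA
  have e1 : esymN (Finset.Icc i (i + n + 1)) f (n + 1) = P + f (i + n + 1) * A := by
    rw [hset1, esymN_insert hmem1, hE1]
  have e1g : esymN (Finset.Icc i (i + n + 1)) g (n + 1) = P + (f (i + n + 1) + 2 * t) * A := by
    rw [hset1, esymN_insert hmem1, hE1g, hgw, hAg]
  obtain ⟨B, e2, e2g⟩ : ∃ B : ℤ,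
      esymN (Finset.Icc (i + 1) (i + n + 1)) f n = Q + f (i + n + 1) * B ∧
      esymN (Finset.Icc (i + 1) (i + n + 1)) g n = Q + (f (i + n + 1) + 2 * t) * B := by
    cases n with
    | zero =>
      refine ⟨0, ?_, ?_⟩ <;>
        simp [esymN_zero, hQ, show Finset.Icc (i + 1) (i + 0) = ∅ from
          Finset.Icc_eq_empty (by omega)]
    | succ m =>
      have hE2 : esymN (Finset.Icc (i + 1) (i + (m + 1))) f (m + 1) = Q := by
        have h := esymN_card (Finset.Icc (i + 1) (i + (m + 1))) f
        rw [hcard2] at h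
        exact h
      refine ⟨esymN (Finset.Icc (i + 1) (i + (m + 1))) f m, ?_, ?_⟩
      · rw [hset2, esymN_insert hmem2, hE2]
      · rw [hset2, esymN_insert hmem2, ← esymN_congr hgf2, ← esymN_congr hgf2, hgw, hE2]
  have hprodfull : ∏ j ∈ Finset.Icc i (i + n + 1), f j = f (i + n + 1) * P := by
    rw [hset1, Finset.prod_insert hmem1]
  rw [hprodfull, e1, e1g, e2, e2g, hPQ]
  ring

/-- indices shifted to be 0-based: replacing the last variable
`x (k-1)` by `x (k-1) + 2t` strictly decreases the bound
`(x i − 2)·x i ⋯ x (k-1) / (2σ_{k−i−1}(x i,…,x (k-1)) − (x i)²σ_{k−i−2}(x (i+1),…,x (k-1)))`,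
provided both denominators are positive; moreover the difference of cross products
is `2t·(x i − 2)²·(x i ⋯ x (k-2))²`. -/
theorem stmt_17 (i k t : ℕ) (ht : 0 < t) (hik : i ≤ k - 2) (hk : 2 ≤ k)
    (x : ℕ → ℕ) (hx : ∀ j, i ≤ j → j ≤ k - 1 → Odd (x j) ∧ 0 < x j)
    (hD : 0 < 2 * esymN (Finset.Icc i (k - 1)) (fun j => (x j : ℤ)) (k - i - 1) -
      (x i : ℤ) ^ 2 * esymN (Finset.Icc (i + 1) (k - 1)) (fun j => (x j : ℤ)) (k - i - 2))
    (hD' : 0 < 2 * esymN (Finset.Icc i (k - 1))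
        (Function.update (fun j => (x j : ℤ)) (k - 1) ((x (k - 1) : ℤ) + 2 * t)) (k - i - 1) -
      (x i : ℤ) ^ 2 * esymN (Finset.Icc (i + 1) (k - 1))
        (Function.update (fun j => (x j : ℤ)) (k - 1) ((x (k - 1) : ℤ) + 2 * t)) (k - i - 2)) :
    ((((x i : ℚ) - 2) * ∏ j ∈ Finset.Icc i (k - 1), (x j : ℚ)) /
        ((2 * esymN (Finset.Icc i (k - 1)) (fun j => (x j : ℤ)) (k - i - 1) -
          (x i : ℤ) ^ 2 * esymN (Finset.Icc (i + 1) (k - 1)) (fun j => (x j : ℤ))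
            (k - i - 2) : ℤ) : ℚ) >
      (((x i : ℚ) - 2) * (∏ j ∈ Finset.Icc i (k - 2), (x j : ℚ)) * ((x (k - 1) : ℚ) + 2 * t)) /
        ((2 * esymN (Finset.Icc i (k - 1))
            (Function.update (fun j => (x j : ℤ)) (k - 1) ((x (k - 1) : ℤ) + 2 * t)) (k - i - 1) -
          (x i : ℤ) ^ 2 * esymN (Finset.Icc (i + 1) (k - 1))
            (Function.update (fun j => (x j : ℤ)) (k - 1) ((x (k - 1) : ℤ) + 2 * t))
            (k - i - 2) : ℤ) : ℚ)) ∧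
    (((x i : ℤ) - 2) * (∏ j ∈ Finset.Icc i (k - 1), (x j : ℤ))) *
        (2 * esymN (Finset.Icc i (k - 1))
            (Function.update (fun j => (x j : ℤ)) (k - 1) ((x (k - 1) : ℤ) + 2 * t)) (k - i - 1) -
          (x i : ℤ) ^ 2 * esymN (Finset.Icc (i + 1) (k - 1))
            (Function.update (fun j => (x j : ℤ)) (k - 1) ((x (k - 1) : ℤ) + 2 * t)) (k - i - 2)) -
      (((x i : ℤ) - 2) * (∏ j ∈ Finset.Icc i (k - 2), (x j : ℤ)) * ((x (k - 1) : ℤ) + 2 * t)) *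
        (2 * esymN (Finset.Icc i (k - 1)) (fun j => (x j : ℤ)) (k - i - 1) -
          (x i : ℤ) ^ 2 * esymN (Finset.Icc (i + 1) (k - 1)) (fun j => (x j : ℤ)) (k - i - 2)) =
      2 * t * ((x i : ℤ) - 2) ^ 2 * (∏ j ∈ Finset.Icc i (k - 2), (x j : ℤ)) ^ 2 := by
  have key := stmt_17' i k t ht hik hk x hx hD hD'
  refine ⟨?_, key⟩
  have hDQ : (0 : ℚ) <
      ((2 * esymN (Finset.Icc i (k - 1)) (fun j => (x j : ℤ)) (k - i - 1) -
        (x i : ℤ) ^ 2 * esymN (Finset.Icc (i + 1) (k - 1)) (fun j => (x j : ℤ))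
          (k - i - 2) : ℤ) : ℚ) := by exact_mod_cast hD
  have hD'Q : (0 : ℚ) <
      ((2 * esymN (Finset.Icc i (k - 1))
          (Function.update (fun j => (x j : ℤ)) (k - 1) ((x (k - 1) : ℤ) + 2 * t)) (k - i - 1) -
        (x i : ℤ) ^ 2 * esymN (Finset.Icc (i + 1) (k - 1))
          (Function.update (fun j => (x j : ℤ)) (k - 1) ((x (k - 1) : ℤ) + 2 * t))
          (k - i - 2) : ℤ) : ℚ) := by exact_mod_cast hD'
  rw [gt_iff_lt, div_lt_div_iff₀ hD'Q hDQ]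
  have hne : ((x i : ℤ) - 2) ≠ 0 := by
    obtain ⟨c, hc⟩ := (hx i le_rfl (by omega)).1
    omega
  have hprodpos : 0 < ∏ j ∈ Finset.Icc i (k - 2), (x j : ℤ) := by
    refine Finset.prod_pos fun j hj => ?_
    rw [Finset.mem_Icc] at hj
    exact_mod_cast (hx j hj.1 (by omega)).2
  have hpos : 0 < 2 * (t : ℤ) * ((x i : ℤ) - 2) ^ 2 * (∏ j ∈ Finset.Icc i (k - 2), (x j : ℤ)) ^ 2 := by
    have h1 : 0 < ((x i : ℤ) - 2) ^ 2 := pow_two_pos_of_ne_zero hne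
    have h2 : 0 < (∏ j ∈ Finset.Icc i (k - 2), (x j : ℤ)) ^ 2 := pow_pos hprodpos 2
    have h3 : 0 < 2 * (t : ℤ) := by positivity
    exact mul_pos (mul_pos h3 h1) h2
  have hZ : (((x i : ℤ) - 2) * (∏ j ∈ Finset.Icc i (k - 2), (x j : ℤ)) * ((x (k - 1) : ℤ) + 2 * t)) *
        (2 * esymN (Finset.Icc i (k - 1)) (fun j => (x j : ℤ)) (k - i - 1) -
          (x i : ℤ) ^ 2 * esymN (Finset.Icc (i + 1) (k - 1)) (fun j => (x j : ℤ)) (k - i - 2)) <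
      (((x i : ℤ) - 2) * (∏ j ∈ Finset.Icc i (k - 1), (x j : ℤ))) *
        (2 * esymN (Finset.Icc i (k - 1))
            (Function.update (fun j => (x j : ℤ)) (k - 1) ((x (k - 1) : ℤ) + 2 * t)) (k - i - 1) -
          (x i : ℤ) ^ 2 * esymN (Finset.Icc (i + 1) (k - 1))
            (Function.update (fun j => (x j : ℤ)) (k - 1) ((x (k - 1) : ℤ) + 2 * t)) (k - i - 2)) := by
    linarith [key, hpos]
  exact_mod_cast hZ
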